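/- Let V and U be vector spaces over a field of characteristic zero. Let ρ : V⁴ → U be a 4-linear map which satisfies the circular identity with respect to its first three entries, i.e. ρ(v₁,v₂,v₃,v₄) + ρ(v₂,v₃,v₁,v₄) + ρ(v₃,v₁,v₂,v₄) = 0, and with respect to its last three entries, i.e. ρ(v₁,v₂,v₃,v₄) + ρ(v₁,v₃,v₄,v₂) + ρ(v₁,v₄,v₂,v₃) = 0, and which is antisymmetric in its second and third entries. Define ρ₂(v₁,v₂,v₃,v₄) := ρ(v₂,v₁,v₃,v₄) and ρ₃(v₁,v₂,v₃,v₄) := ρ(v₂,v₃,v₁,v₄). Then a 4-linear map S : V⁴ → U which is symmetric in its last three entries satisfies Alt₂(8·Sym_{3,4} ρ − S) = 0 if and only if S = −2·Sym_{2,3,4} ρ₂ + σ, equivalently S = 2·Sym_{2,3,4} ρ₃ + σ, for some fully symmetric 4-linear map σ : V⁴ → U. -/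
import Mathlib


/-- `Sym_{2,3,4}` (without normalizing coefficient) of a 4-entry expression. -/
def Sym234 {V U : Type*} [AddCommMonoid U] (θ : V → V → V → V → U)
    (a b c d : V) : U :=
  θ a b c d + θ a b d c + θ a c b d + θ a c d b + θ a d b c + θ a d c b

/-- Helper to build a permutation of `Fin 4` from explicit value tables. -/
def permOf4 (f g : Fin 4 → Fin 4) (h1 : ∀ i, g (f i) = i) (h2 : ∀ i, f (g i) = i) :
    Equiv.Perm (Fin 4) := ⟨f, g, h1, h2⟩

/-- Lemma 7.3 of the paper, pointwise: for a 4-linear `ρ` satisfying the circular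
identity in its first three and last three entries and antisymmetric in its second
and third entries, a 4-linear `S` symmetric in its last three entries satisfies
`Alt₂(8·Sym_{3,4}ρ − S) = 0` iff `S = −2·Sym_{2,3,4}ρ₂ + σ = 2·Sym_{2,3,4}ρ₃ + σ`
for some fully symmetric `σ`. -/
theorem alt_sym_curvature
    {K V U : Type*} [Field K] [CharZero K] [AddCommGroup V] [Module K V]
    [AddCommGroup U] [Module K U]
    (ρ S : MultilinearMap K (fun _ : Fin 4 => V) U)
    (hc1 : ∀ v₁ v₂ v₃ v₄ : V,
      ρ ![v₁, v₂, v₃, v₄] + ρ ![v₂, v₃, v₁, v₄] + ρ ![v₃, v₁, v₂, v₄] = 0)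
    (hc2 : ∀ v₁ v₂ v₃ v₄ : V,
      ρ ![v₁, v₂, v₃, v₄] + ρ ![v₁, v₃, v₄, v₂] + ρ ![v₁, v₄, v₂, v₃] = 0)
    (hanti : ∀ v₁ v₂ v₃ v₄ : V, ρ ![v₁, v₃, v₂, v₄] = - ρ ![v₁, v₂, v₃, v₄])
    (hS : ∀ σ : Equiv.Perm (Fin 4), σ 0 = 0 →
      ∀ v : Fin 4 → V, S (fun i => v (σ i)) = S v) :
    (∀ v₁ v₂ v₃ v₄ : V,
      ((8 : K) • (ρ ![v₁, v₂, v₃, v₄] + ρ ![v₁, v₂, v₄, v₃]) - S ![v₁, v₂, v₃, v₄])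
      - ((8 : K) • (ρ ![v₂, v₁, v₃, v₄] + ρ ![v₂, v₁, v₄, v₃]) - S ![v₂, v₁, v₃, v₄])
      = 0) ↔
    (∃ σ : MultilinearMap K (fun _ : Fin 4 => V) U,
      (∀ τ : Equiv.Perm (Fin 4), ∀ v : Fin 4 → V, σ (fun i => v (τ i)) = σ v) ∧
      (∀ v₁ v₂ v₃ v₄ : V,
        S ![v₁, v₂, v₃, v₄] =
          (-2 : K) • Sym234 (fun a b c d => ρ ![b, a, c, d]) v₁ v₂ v₃ v₄
          + σ ![v₁, v₂, v₃, v₄]) ∧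
      (∀ v₁ v₂ v₃ v₄ : V,
        S ![v₁, v₂, v₃, v₄] =
          (2 : K) • Sym234 (fun a b c d => ρ ![b, c, a, d]) v₁ v₂ v₃ v₄
          + σ ![v₁, v₂, v₃, v₄])) := by
  -- the six permutations needed for `Sym_{2,3,4} ρ₂`
  have e1 : Equiv.Perm (Fin 4) := permOf4 ![1,0,2,3] ![1,0,2,3] (by decide) (by decide)
  constructor
  · intro halt
    -- define σ := S + 2 · Sym_{2,3,4} ρ₂ as a multilinear map
    set T : MultilinearMap K (fun _ : Fin 4 => V) U :=
        ρ.domDomCongr (permOf4 ![1,0,2,3] ![1,0,2,3] (by decide) (by decide))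
      + ρ.domDomCongr (permOf4 ![1,0,3,2] ![1,0,3,2] (by decide) (by decide))
      + ρ.domDomCongr (permOf4 ![2,0,1,3] ![1,2,0,3] (by decide) (by decide))
      + ρ.domDomCongr (permOf4 ![2,0,3,1] ![1,3,0,2] (by decide) (by decide))
      + ρ.domDomCongr (permOf4 ![3,0,1,2] ![1,2,3,0] (by decide) (by decide))
      + ρ.domDomCongr (permOf4 ![3,0,2,1] ![1,3,2,0] (by decide) (by decide))
      with hTdef
    set σm : MultilinearMap K (fun _ : Fin 4 => V) U := S + (2 : K) • T with hσdef
    have hTapp : ∀ a b c d : V, T ![a,b,c,d]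
        = ρ ![b,a,c,d] + ρ ![b,a,d,c] + ρ ![c,a,b,d] + ρ ![c,a,d,b]
          + ρ ![d,a,b,c] + ρ ![d,a,c,b] := by
      intro a b c d
      simp only [hTdef, MultilinearMap.add_apply, MultilinearMap.domDomCongr_apply]
      congr 1 <;> [skip; (congr 1 <;> funext i <;> fin_cases i <;> rfl)]
      congr 1 <;> [skip; (congr 1 <;> funext i <;> fin_cases i <;> rfl)]
      congr 1 <;> [skip; (congr 1 <;> funext i <;> fin_cases i <;> rfl)]
      congr 1 <;> [skip; (congr 1 <;> funext i <;> fin_cases i <;> rfl)]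
      congr 1 <;> (congr 1 <;> funext i <;> fin_cases i <;> rfl)
    have hσapp : ∀ a b c d : V, σm ![a,b,c,d]
        = S ![a,b,c,d] + (2 : K) • (ρ ![b,a,c,d] + ρ ![b,a,d,c] + ρ ![c,a,b,d]
          + ρ ![c,a,d,b] + ρ ![d,a,b,c] + ρ ![d,a,c,b]) := by
      intro a b c d
      simp only [hσdef, MultilinearMap.add_apply, MultilinearMap.smul_apply, hTapp]
    -- S is symmetric in its last three entries, pointwise
    have hS12 : ∀ a b c d : V, S ![a,b,c,d] = S ![a,c,b,d] := by
      intro a b c d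
      have := hS (permOf4 ![0,2,1,3] ![0,2,1,3] (by decide) (by decide)) rfl ![a,b,c,d]
      have h2 : (fun i => (![a,b,c,d] : Fin 4 → V)
          ((permOf4 ![0,2,1,3] ![0,2,1,3] (by decide) (by decide)) i)) = ![a,c,b,d] := by
        funext i; fin_cases i <;> rfl
      rw [h2] at this
      exact this.symm
    have hS23 : ∀ a b c d : V, S ![a,b,c,d] = S ![a,b,d,c] := by
      intro a b c d
      have := hS (permOf4 ![0,1,3,2] ![0,1,3,2] (by decide) (by decide)) rfl ![a,b,c,d]
      have h2 : (fun i => (![a,b,c,d] : Fin 4 → V)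
          ((permOf4 ![0,1,3,2] ![0,1,3,2] (by decide) (by decide)) i)) = ![a,b,d,c] := by
        funext i; fin_cases i <;> rfl
      rw [h2] at this
      exact this.symm
    -- pointwise symmetries of σm
    have h12 : ∀ a b c d : V, σm ![a,b,c,d] = σm ![a,c,b,d] := by
      intro a b c d
      rw [hσapp, hσapp, hS12 a b c d]
      module
    have h23 : ∀ a b c d : V, σm ![a,b,c,d] = σm ![a,b,d,c] := by
      intro a b c d
      rw [hσapp, hσapp, hS23 a b c d]
      module
    have h01 : ∀ a b c d : V, σm ![a,b,c,d] = σm ![b,a,c,d] := by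
      intro a b c d
      rw [hσapp, hσapp]
      linear_combination (norm := module)
        (-1 : K) • halt a b c d
        + (4 : K) • hc1 a b c d + (-2 : K) • hc2 a b c d + (4 : K) • hanti a b c d
        + (2 : K) • hc1 a b d c + (4 : K) • hanti a b d c
        + (-4 : K) • hc1 a c b d + (2 : K) • hc1 a c d b + (-2 : K) • hc1 a d b c
        + (2 : K) • hc2 b a c d + (-4 : K) • hanti b a c d + (-4 : K) • hanti b a d c
        + (-2 : K) • hc1 b c d a + (-2 : K) • hc2 c a b d + (2 : K) • hc2 c a d b
    have h02 : ∀ a b c d : V, σm ![a,b,c,d] = σm ![c,b,a,d] := by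
      intro a b c d
      rw [h12, h01, h12]
    have h03 : ∀ a b c d : V, σm ![a,b,c,d] = σm ![d,b,c,a] := by
      intro a b c d
      rw [h23, h12, h01, h12, h23]
    have h13 : ∀ a b c d : V, σm ![a,b,c,d] = σm ![a,d,c,b] := by
      intro a b c d
      rw [h23, h12, h23]
    have hvec : ∀ w : Fin 4 → V, σm w = σm ![w 0, w 1, w 2, w 3] := by
      intro w
      congr 1; funext i; fin_cases i <;> rfl
    have hswap : ∀ x y : Fin 4, ∀ v : Fin 4 → V,
        σm (fun j => v (Equiv.swap x y j)) = σm v := by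
      intro x y v
      rw [hvec (fun j => v (Equiv.swap x y j)), hvec v]
      fin_cases x <;> fin_cases y <;>
        simp only [Equiv.swap_apply_def] <;> norm_num <;>
        first
          | rfl
          | exact (h01 (v 0) (v 1) (v 2) (v 3)).symm
          | exact (h02 (v 0) (v 1) (v 2) (v 3)).symm
          | exact (h03 (v 0) (v 1) (v 2) (v 3)).symm
          | exact (h12 (v 0) (v 1) (v 2) (v 3)).symm
          | exact (h13 (v 0) (v 1) (v 2) (v 3)).symm
          | exact (h23 (v 0) (v 1) (v 2) (v 3)).symm
    have hgen : ∀ τ : Equiv.Perm (Fin 4), ∀ v : Fin 4 → V,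
        σm (fun i => v (τ i)) = σm v := by
      intro τ
      refine Equiv.Perm.swap_induction_on τ (fun v => rfl) ?_
      intro f x y _ ih v
      exact (ih (fun j => v (Equiv.swap x y j))).trans (hswap x y v)
    refine ⟨σm, hgen, ?_, ?_⟩
    · intro a b c d
      rw [hσapp]
      simp only [Sym234]
      module
    · intro a b c d
      rw [hσapp]
      simp only [Sym234]
      linear_combination (norm := module)
        (-2 : K) • hc1 a b c d + (2 : K) • hc2 a b c d
        + (-2 : K) • hc1 a b d c + (2 : K) • hc2 a b d c
        + (-2 : K) • hc1 a c b d + (-2 : K) • hc1 a c d b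
        + (-2 : K) • hc1 a d b c + (-2 : K) • hc1 a d c b
  · rintro ⟨σ, hsym, h2, _⟩
    intro a b c d
    have hσswap : σ ![b,a,c,d] = σ ![a,b,c,d] := by
      have := hsym (Equiv.swap 0 1) ![a,b,c,d]
      have hfun : (fun i => (![a,b,c,d] : Fin 4 → V) (Equiv.swap (0 : Fin 4) 1 i))
          = ![b,a,c,d] := by
        funext i; fin_cases i <;> simp [Equiv.swap_apply_def] <;> rfl
      rw [hfun] at this
      exact this
    rw [h2 a b c d, h2 b a c d, hσswap]
    simp only [Sym234]
    linear_combination (norm := module)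
      (4 : K) • hc1 a b c d + (-2 : K) • hc2 a b c d + (4 : K) • hanti a b c d
      + (2 : K) • hc1 a b d c + (4 : K) • hanti a b d c
      + (-4 : K) • hc1 a c b d + (2 : K) • hc1 a c d b + (-2 : K) • hc1 a d b c
      + (2 : K) • hc2 b a c d + (-4 : K) • hanti b a c d + (-4 : K) • hanti b a d c
      + (-2 : K) • hc1 b c d a + (-2 : K) • hc2 c a b d + (2 : K) • hc2 c a d b
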